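/- For g ≥ 3, the abelianization of G_E(g) is isomorphic to the cyclic group Z/(2(g−1)g) if g is odd, and to Z/((g−1)g) ⊕ Z/2 if g is even. Moreover, for g odd the abelianization is generated by the image of t_1, and for g even by the images of t_1 and ρ. -/

import Mathlib

open FreeGroup in
/-- Relations (E1)-(E5). The generator `some i` is `t_{i+1}` and `none` is `ρ`. -/
def relsE (g : ℕ) : Set (FreeGroup (Option (Fin (g-1)))) :=
  -- (E1)
  {r | ∃ j k : Fin (g-1), ((j : ℕ) + 1 < k ∨ (k : ℕ) + 1 < j) ∧
        r = of (some k) * of (some j) * (of (some j) * of (some k))⁻¹} ∪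
  -- (E2)
  {r | ∃ j k : Fin (g-1), (j : ℕ) + 1 = k ∧
        r = of (some j) * of (some k) * of (some j) *
            (of (some k) * of (some j) * of (some k))⁻¹} ∪
  -- (E3)
  {(List.ofFn (fun i : Fin (g-1) => of (some i : Option (Fin (g-1))))).prod ^ g *
      (if Odd g then (of (none : Option (Fin (g-1))))⁻¹ else 1)} ∪
  -- (E4)
  {of (none : Option (Fin (g-1))) ^ 2} ∪
  -- (E5)  ρ t_j ρ = t_j
  {r | ∃ j : Fin (g-1), r = of none * of (some j) * of none * (of (some j))⁻¹}

/-- `G_E(g)`, a presentation of the group `M^{h+}(N_g)`. -/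
def GE (g : ℕ) : Type := PresentedGroup (relsE g)

instance (g : ℕ) : Group (GE g) := by unfold GE; infer_instance

/-- The generator `t_{i+1}` of `G_E(g)`. -/
def GE.t {g : ℕ} (i : Fin (g-1)) : GE g := PresentedGroup.of (rels := relsE g) (some i)

/-- The generator `ρ` of `G_E(g)`. -/
def GE.ρ (g : ℕ) : GE g := PresentedGroup.of (rels := relsE g) none


-- infrastructure
def mkGE (g : ℕ) : FreeGroup (Option (Fin (g-1))) →* GE g :=
  QuotientGroup.mk' (Subgroup.normalClosure (relsE g))

lemma mkGE_of {g : ℕ} (x : Option (Fin (g-1))) :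
    mkGE g (FreeGroup.of x) = PresentedGroup.of (rels := relsE g) x := rfl

lemma mk_rel {g : ℕ} {r : FreeGroup (Option (Fin (g-1)))} (h : r ∈ relsE g) :
    mkGE g r = 1 :=
  (QuotientGroup.eq_one_iff _).2 (Subgroup.subset_normalClosure h)

lemma braid_eq {A : Type*} [CommGroup A] {x y : A} (h : x*y*x = y*x*y) : x = y :=
  mul_left_cancel (a := x*y) (h.trans (by rw [mul_comm x y]))

noncomputable def abGE (g : ℕ) : FreeGroup (Option (Fin (g-1))) →* Abelianization (GE g) :=
  (Abelianization.of (G := GE g)).comp (mkGE g)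

lemma abGE_of {g : ℕ} (x : Option (Fin (g-1))) :
    abGE g (FreeGroup.of x) = Abelianization.of (PresentedGroup.of (rels := relsE g) x) := rfl

lemma ab_rel {g : ℕ} {r : FreeGroup (Option (Fin (g-1)))} (h : r ∈ relsE g) :
    abGE g r = 1 := by
  rw [abGE, MonoidHom.comp_apply, mk_rel h, map_one]

section
variable (g : ℕ) (hg : 3 ≤ g)

lemma t_succ (j k : Fin (g-1)) (h : (j : ℕ) + 1 = k) :
    Abelianization.of (GE.t j) = Abelianization.of (GE.t k) := by
  have hm : (FreeGroup.of (some j) * FreeGroup.of (some k) * FreeGroup.of (some j) *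
      (FreeGroup.of (some k) * FreeGroup.of (some j) * FreeGroup.of (some k))⁻¹ : FreeGroup (Option (Fin (g-1)))) ∈ relsE g := by
    left; left; left; right; exact ⟨j, k, h, rfl⟩
  have := ab_rel hm
  simp only [map_mul, map_inv, abGE_of] at this
  exact braid_eq (by rwa [mul_inv_eq_one] at this)

lemma t_all (i : Fin (g-1)) :
    Abelianization.of (GE.t i) = Abelianization.of (GE.t (⟨0, Nat.sub_pos_of_lt (by omega)⟩ : Fin (g-1))) := by
  obtain ⟨k, hk⟩ := i
  induction k with
  | zero => rfl
  | succ n ih =>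
      have hn : n < g - 1 := by omega
      rw [← t_succ g ⟨n, hn⟩ ⟨n+1, hk⟩ rfl, ih hn]

lemma rho_sq : Abelianization.of (GE.ρ g) ^ 2 = 1 := by
  have hm : (FreeGroup.of (none : Option (Fin (g-1))) ^ 2) ∈ relsE g := by
    left; right; rfl
  have := ab_rel hm
  rw [map_pow] at this
  exact this

lemma t_pow :
    Abelianization.of (GE.t (⟨0, Nat.sub_pos_of_lt (by omega)⟩ : Fin (g-1))) ^ ((g-1) * g) =
      (if Odd g then Abelianization.of (GE.ρ g) else 1) := by
  have hm : ((List.ofFn (fun i : Fin (g-1) => FreeGroup.of (some i : Option (Fin (g-1))))).prod ^ g *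
      (if Odd g then (FreeGroup.of (none : Option (Fin (g-1))))⁻¹ else 1)) ∈ relsE g := by
    left; left; right; rfl
  have h1 := ab_rel hm
  rw [map_mul, map_pow, map_list_prod] at h1
  have h2 : (List.ofFn (fun i : Fin (g-1) => FreeGroup.of (some i : Option (Fin (g-1))))).map (abGE g)
      = List.ofFn (fun _ : Fin (g-1) => Abelianization.of (GE.t (⟨0, Nat.sub_pos_of_lt (by omega)⟩ : Fin (g-1)))) := by
    rw [List.map_ofFn]
    congr 1
    funext i
    exact t_all g hg i
  rw [h2, List.prod_ofFn, Finset.prod_const, Finset.card_univ, Fintype.card_fin, ← pow_mul] at h1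
  by_cases hodd : Odd g
  · simp only [hodd, if_true, map_inv] at h1 ⊢
    rw [mul_inv_eq_one] at h1
    exact h1
  · simp only [hodd, if_false, map_one, mul_one] at h1 ⊢
    exact h1
end

lemma gen_top {g : ℕ} (S : Subgroup (Abelianization (GE g)))
    (h : ∀ y, Abelianization.of (PresentedGroup.of (rels := relsE g) y) ∈ S) : S = ⊤ := by
  rw [Subgroup.eq_top_iff']
  intro x
  refine QuotientGroup.induction_on x ?_
  intro z
  show Abelianization.of z ∈ S
  obtain ⟨w, rfl⟩ := QuotientGroup.mk'_surjective (Subgroup.normalClosure (relsE g)) z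
  show abGE g w ∈ S
  refine FreeGroup.induction_on w ?_ ?_ ?_ ?_
  · rw [map_one]; exact S.one_mem
  · intro y; exact h y
  · intro y hy; rw [map_inv]; exact S.inv_mem hy
  · intro y z hy hz; rw [map_mul]; exact S.mul_mem hy hz

lemma conj_comm' {A : Type*} [CommGroup A] (x y : A) : x*y*x*y⁻¹ = x^2 := by
  calc x*y*x*y⁻¹ = (x*y)*(x*y⁻¹) := by group
    _ = (x*x)*(y*y⁻¹) := mul_mul_mul_comm x y x y⁻¹
    _ = x^2 := by rw [mul_inv_cancel, mul_one, pow_two]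

section odd
variable (g : ℕ)

noncomputable def fOdd : Option (Fin (g-1)) → Multiplicative (ZMod (2*((g-1)*g))) :=
  fun x => x.elim ((Multiplicative.ofAdd (1 : ZMod (2*((g-1)*g)))) ^ ((g-1)*g))
    (fun _ => Multiplicative.ofAdd (1 : ZMod (2*((g-1)*g))))

lemma uN : (Multiplicative.ofAdd (1 : ZMod (2*((g-1)*g)))) ^ (2*((g-1)*g)) = 1 := by
  rw [← ofAdd_nsmul, nsmul_eq_mul, mul_one]
  simp [ZMod.natCast_self]

lemma fOdd_rel (hodd : Odd g) : ∀ r ∈ relsE g, FreeGroup.lift (fOdd g) r = 1 := by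
  set u := Multiplicative.ofAdd (1 : ZMod (2*((g-1)*g))) with hu
  intro r hr
  rcases hr with ((((⟨j,k,hjk,rfl⟩|⟨j,k,hjk,rfl⟩)|h3)|h4)|⟨j,rfl⟩)
  · simp only [map_mul, map_inv, FreeGroup.lift_apply_of, fOdd, Option.elim]
    group
  · simp only [map_mul, map_inv, FreeGroup.lift_apply_of, fOdd, Option.elim]
    group
  · rcases h3 with rfl
    rw [if_pos hodd]
    rw [map_mul, map_pow, map_list_prod, map_inv, FreeGroup.lift_apply_of]
    have h2 : (List.ofFn (fun i : Fin (g-1) => FreeGroup.of (some i : Option (Fin (g-1))))).map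
        (FreeGroup.lift (fOdd g)) = List.ofFn (fun _ : Fin (g-1) => u) := by
      rw [List.map_ofFn]
      congr 1
      funext i
      simp only [Function.comp_apply, FreeGroup.lift_apply_of]
      rfl
    rw [h2, List.prod_ofFn, Finset.prod_const, Finset.card_univ, Fintype.card_fin, ← pow_mul]
    show u ^ ((g-1)*g) * ((fOdd g none))⁻¹ = 1
    show u ^ ((g-1)*g) * (u ^ ((g-1)*g))⁻¹ = 1
    group
  · rcases h4 with rfl
    rw [map_pow, FreeGroup.lift_apply_of]
    show (u ^ ((g-1)*g)) ^ 2 = 1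
    rw [← pow_mul, mul_comm ((g-1)*g) 2]
    exact uN g
  · simp only [map_mul, map_inv, FreeGroup.lift_apply_of, fOdd, Option.elim]
    rw [conj_comm' (u ^ ((g-1)*g)) u, ← pow_mul, mul_comm ((g-1)*g) 2]
    exact uN g
end odd

section odd2
variable (g : ℕ)

lemma aN (hg : 3 ≤ g) (hodd : Odd g) :
    Abelianization.of (GE.t (⟨0, Nat.sub_pos_of_lt (by omega)⟩ : Fin (g-1))) ^ (2*((g-1)*g)) = 1 := by
  rw [mul_comm 2 ((g-1)*g), pow_mul, t_pow g hg, if_pos hodd]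
  exact rho_sq g

noncomputable def psiOdd (hg : 3 ≤ g) (hodd : Odd g) :
    Multiplicative (ZMod (2*((g-1)*g))) →* Abelianization (GE g) :=
  AddMonoidHom.toMultiplicativeLeft
    (ZMod.lift (2*((g-1)*g)) ⟨zmultiplesHom _
      (Additive.ofMul (Abelianization.of (GE.t (⟨0, Nat.sub_pos_of_lt (by omega)⟩ : Fin (g-1))))), by
        simp only [zmultiplesHom_apply]
        rw [← ofMul_zpow, zpow_natCast, aN g hg hodd, ofMul_one]⟩)

lemma psiOdd_one (hg : 3 ≤ g) (hodd : Odd g) :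
    psiOdd g hg hodd (Multiplicative.ofAdd 1) =
      Abelianization.of (GE.t (⟨0, Nat.sub_pos_of_lt (by omega)⟩ : Fin (g-1))) := by
  have h1 : (1 : ZMod (2*((g-1)*g))) = ((1:ℤ) : ZMod (2*((g-1)*g))) := by norm_cast
  rw [psiOdd, AddMonoidHom.coe_toMultiplicativeLeft]
  simp only [Function.comp_apply, toAdd_ofAdd]
  rw [h1, ZMod.lift_coe]
  simp only [zmultiplesHom_apply, one_zsmul, toMul_ofMul]

noncomputable def phiOdd (hodd : Odd g) :
    Abelianization (GE g) →* Multiplicative (ZMod (2*((g-1)*g))) :=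
  Abelianization.lift (PresentedGroup.toGroup (fOdd_rel g hodd))

lemma phiOdd_of (hodd : Odd g) (x : Option (Fin (g-1))) :
    phiOdd g hodd (Abelianization.of (PresentedGroup.of (rels := relsE g) x)) = fOdd g x := by
  rw [phiOdd]; erw [Abelianization.lift_apply_of]
  exact PresentedGroup.toGroup.of _

end odd2

section odd3
variable (g : ℕ)

lemma psiOdd_int (hg : 3 ≤ g) (hodd : Odd g) (k : ℤ) :
    psiOdd g hg hodd (Multiplicative.ofAdd ((k : ZMod (2*((g-1)*g))))) =
      Abelianization.of (GE.t (⟨0, Nat.sub_pos_of_lt (by omega)⟩ : Fin (g-1))) ^ k := by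
  rw [psiOdd, AddMonoidHom.coe_toMultiplicativeLeft]
  simp only [Function.comp_apply, toAdd_ofAdd]
  rw [ZMod.lift_coe]
  simp only [zmultiplesHom_apply, ← ofMul_zpow, toMul_ofMul]

lemma odd_left (hg : 3 ≤ g) (hodd : Odd g) :
    (psiOdd g hg hodd).comp (phiOdd g hodd) = MonoidHom.id _ := by
  refine Abelianization.hom_ext _ _ ?_
  refine PresentedGroup.ext fun x => ?_
  show psiOdd g hg hodd (phiOdd g hodd (Abelianization.of (PresentedGroup.of (rels := relsE g) x))) =
    Abelianization.of (PresentedGroup.of (rels := relsE g) x)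
  refine (congrArg _ (phiOdd_of g hodd x)).trans ?_
  cases x with
  | some i =>
      refine (congrArg _ (show fOdd g (some i) = Multiplicative.ofAdd 1 from rfl)).trans ?_
      exact (psiOdd_one g hg hodd).trans (t_all g hg i).symm
  | none =>
      refine (congrArg _ (show fOdd g none = (Multiplicative.ofAdd 1) ^ ((g-1)*g) from rfl)).trans ?_
      rw [map_pow, psiOdd_one g hg hodd]
      exact ((t_pow g hg).trans (if_pos hodd)).symm ▸ rfl

lemma odd_right (hg : 3 ≤ g) (hodd : Odd g) :
    (phiOdd g hodd).comp (psiOdd g hg hodd) = MonoidHom.id _ := by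
  refine MonoidHom.ext fun x => ?_
  obtain ⟨k, hk⟩ := ZMod.intCast_surjective (Multiplicative.toAdd x)
  have hx : x = Multiplicative.ofAdd ((k : ZMod (2*((g-1)*g)))) := by rw [hk, ofAdd_toAdd]
  rw [hx]
  simp only [MonoidHom.comp_apply, MonoidHom.id_apply]
  rw [psiOdd_int g hg hodd k, map_zpow]
  have ha : phiOdd g hodd (Abelianization.of (GE.t (⟨0, Nat.sub_pos_of_lt (by omega)⟩ : Fin (g-1)))) =
      Multiplicative.ofAdd (1 : ZMod (2*((g-1)*g))) := phiOdd_of g hodd (some _)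
  rw [ha, ← ofAdd_zsmul, zsmul_one]

noncomputable def oddEquiv (hg : 3 ≤ g) (hodd : Odd g) :
    Abelianization (GE g) ≃* Multiplicative (ZMod (2*((g-1)*g))) :=
  MonoidHom.toMulEquiv (phiOdd g hodd) (psiOdd g hg hodd) (odd_left g hg hodd)
    (odd_right g hg hodd)

end odd3

section even
variable (g : ℕ)

noncomputable def fEven : Option (Fin (g-1)) → Multiplicative (ZMod ((g-1)*g) × ZMod 2) :=
  fun x => x.elim (Multiplicative.ofAdd ((0 : ZMod ((g-1)*g)), (1 : ZMod 2)))
    (fun _ => Multiplicative.ofAdd ((1 : ZMod ((g-1)*g)), (0 : ZMod 2)))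

lemma u1M : (Multiplicative.ofAdd ((1 : ZMod ((g-1)*g)), (0 : ZMod 2))) ^ ((g-1)*g) = 1 := by
  rw [← ofAdd_nsmul]
  simp [Prod.smul_mk, nsmul_eq_mul, ZMod.natCast_self, Prod.ext_iff]

lemma u2sq : (Multiplicative.ofAdd ((0 : ZMod ((g-1)*g)), (1 : ZMod 2))) ^ 2 = 1 := by
  rw [← ofAdd_nsmul]
  simp [Prod.smul_mk, nsmul_eq_mul, Prod.ext_iff]
  decide

lemma fEven_rel (heven : Even g) : ∀ r ∈ relsE g, FreeGroup.lift (fEven g) r = 1 := by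
  intro r hr
  rcases hr with ((((⟨j,k,hjk,rfl⟩|⟨j,k,hjk,rfl⟩)|h3)|h4)|⟨j,rfl⟩)
  · simp only [map_mul, map_inv, FreeGroup.lift_apply_of, fEven, Option.elim]
    group
  · simp only [map_mul, map_inv, FreeGroup.lift_apply_of, fEven, Option.elim]
    group
  · rcases h3 with rfl
    rw [if_neg (Nat.not_odd_iff_even.mpr heven)]
    rw [map_mul, map_pow, map_list_prod, map_one, mul_one]
    have h2 : (List.ofFn (fun i : Fin (g-1) => FreeGroup.of (some i : Option (Fin (g-1))))).map
        (FreeGroup.lift (fEven g)) =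
        List.ofFn (fun _ : Fin (g-1) =>
          Multiplicative.ofAdd ((1 : ZMod ((g-1)*g)), (0 : ZMod 2))) := by
      rw [List.map_ofFn]
      congr 1
      funext i
      simp only [Function.comp_apply, FreeGroup.lift_apply_of]
      rfl
    rw [h2, List.prod_ofFn, Finset.prod_const, Finset.card_univ, Fintype.card_fin, ← pow_mul]
    exact u1M g
  · rcases h4 with rfl
    rw [map_pow, FreeGroup.lift_apply_of]
    exact u2sq g
  · simp only [map_mul, map_inv, FreeGroup.lift_apply_of, fEven, Option.elim]
    rw [conj_comm']
    exact u2sq g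

lemma aM (hg : 3 ≤ g) (heven : Even g) :
    Abelianization.of (GE.t (⟨0, Nat.sub_pos_of_lt (by omega)⟩ : Fin (g-1))) ^ ((g-1)*g) = 1 := by
  rw [t_pow g hg, if_neg (Nat.not_odd_iff_even.mpr heven)]

noncomputable def psiEven (hg : 3 ≤ g) (heven : Even g) :
    Multiplicative (ZMod ((g-1)*g) × ZMod 2) →* Abelianization (GE g) :=
  AddMonoidHom.toMultiplicativeLeft
    ((ZMod.lift ((g-1)*g) ⟨zmultiplesHom _
        (Additive.ofMul (Abelianization.of (GE.t (⟨0, Nat.sub_pos_of_lt (by omega)⟩ : Fin (g-1))))), by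
          simp only [zmultiplesHom_apply]
          rw [← ofMul_zpow, zpow_natCast, aM g hg heven, ofMul_one]⟩).coprod
      (ZMod.lift 2 ⟨zmultiplesHom _ (Additive.ofMul (Abelianization.of (GE.ρ g))), by
          simp only [zmultiplesHom_apply]
          rw [← ofMul_zpow, zpow_natCast, rho_sq g, ofMul_one]⟩))

lemma psiEven_int (hg : 3 ≤ g) (heven : Even g) (j k : ℤ) :
    psiEven g hg heven (Multiplicative.ofAdd ((j : ZMod ((g-1)*g)), (k : ZMod 2))) =
      Abelianization.of (GE.t (⟨0, Nat.sub_pos_of_lt (by omega)⟩ : Fin (g-1))) ^ j *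
        Abelianization.of (GE.ρ g) ^ k := by
  rw [psiEven, AddMonoidHom.coe_toMultiplicativeLeft]
  simp only [Function.comp_apply, toAdd_ofAdd, AddMonoidHom.coprod_apply]
  rw [ZMod.lift_coe, ZMod.lift_coe]
  simp only [zmultiplesHom_apply, ← ofMul_zpow, ← ofMul_mul, toMul_ofMul]

noncomputable def phiEven (heven : Even g) :
    Abelianization (GE g) →* Multiplicative (ZMod ((g-1)*g) × ZMod 2) :=
  Abelianization.lift (PresentedGroup.toGroup (fEven_rel g heven))

lemma phiEven_of (heven : Even g) (x : Option (Fin (g-1))) :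
    phiEven g heven (Abelianization.of (PresentedGroup.of (rels := relsE g) x)) = fEven g x := by
  rw [phiEven]; erw [Abelianization.lift_apply_of]
  exact PresentedGroup.toGroup.of _

end even

section even2
variable (g : ℕ)

lemma even_left (hg : 3 ≤ g) (heven : Even g) :
    (psiEven g hg heven).comp (phiEven g heven) = MonoidHom.id _ := by
  refine Abelianization.hom_ext _ _ ?_
  refine PresentedGroup.ext fun x => ?_
  show psiEven g hg heven (phiEven g heven (Abelianization.of (PresentedGroup.of (rels := relsE g) x))) =
    Abelianization.of (PresentedGroup.of (rels := relsE g) x)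
  refine (congrArg _ (phiEven_of g heven x)).trans ?_
  cases x with
  | some i =>
      refine (congrArg _ (show fEven g (some i) =
        Multiplicative.ofAdd ((((1:ℤ) : ZMod ((g-1)*g)), ((0:ℤ) : ZMod 2))) from by norm_num [fEven])).trans ?_
      rw [psiEven_int g hg heven 1 0, zpow_one, zpow_zero, mul_one]
      exact (t_all g hg i).symm
  | none =>
      refine (congrArg _ (show fEven g none =
        Multiplicative.ofAdd ((((0:ℤ) : ZMod ((g-1)*g)), ((1:ℤ) : ZMod 2))) from by norm_num [fEven])).trans ?_
      rw [psiEven_int g hg heven 0 1, zpow_one, zpow_zero, one_mul]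
      rfl

lemma even_right (hg : 3 ≤ g) (heven : Even g) :
    (phiEven g heven).comp (psiEven g hg heven) = MonoidHom.id _ := by
  refine MonoidHom.ext fun x => ?_
  obtain ⟨j, hj⟩ := ZMod.intCast_surjective (Multiplicative.toAdd x).1
  obtain ⟨k, hk⟩ := ZMod.intCast_surjective (Multiplicative.toAdd x).2
  have hx : x = Multiplicative.ofAdd ((j : ZMod ((g-1)*g)), (k : ZMod 2)) := by
    rw [hj, hk, Prod.mk.eta, ofAdd_toAdd]
  rw [hx]
  simp only [MonoidHom.comp_apply, MonoidHom.id_apply]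
  rw [psiEven_int g hg heven j k, map_mul, map_zpow, map_zpow]
  have ha : phiEven g heven (Abelianization.of (GE.t (⟨0, Nat.sub_pos_of_lt (by omega)⟩ : Fin (g-1)))) =
      Multiplicative.ofAdd ((1 : ZMod ((g-1)*g)), (0 : ZMod 2)) := phiEven_of g heven (some _)
  have hr : phiEven g heven (Abelianization.of (GE.ρ g)) =
      Multiplicative.ofAdd ((0 : ZMod ((g-1)*g)), (1 : ZMod 2)) := phiEven_of g heven none
  rw [ha, hr, ← ofAdd_zsmul, ← ofAdd_zsmul, ← ofAdd_add]
  congr 1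
  simp [Prod.smul_mk, Prod.ext_iff]

noncomputable def evenEquiv (hg : 3 ≤ g) (heven : Even g) :
    Abelianization (GE g) ≃* Multiplicative (ZMod ((g-1)*g) × ZMod 2) :=
  MonoidHom.toMulEquiv (phiEven g heven) (psiEven g hg heven) (even_left g hg heven)
    (even_right g hg heven)

end even2


/-- `H_1(M^{h+}(N_g)) = ℤ/(2(g-1)g)` for `g` odd, generated by the image of `t_1`, and
`ℤ/((g-1)g) ⊕ ℤ/2` for `g` even, generated by the images of `t_1` and `ρ`. -/
theorem stmt4 (g : ℕ) (hg : 3 ≤ g) :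
    (Odd g →
      Nonempty (Abelianization (GE g) ≃* Multiplicative (ZMod (2 * ((g-1) * g)))) ∧
      Subgroup.closure {Abelianization.of (GE.t (⟨0, by omega⟩ : Fin (g-1)))} = ⊤) ∧
    (Even g →
      Nonempty (Abelianization (GE g) ≃* Multiplicative (ZMod ((g-1) * g) × ZMod 2)) ∧
      Subgroup.closure
        {Abelianization.of (GE.t (⟨0, by omega⟩ : Fin (g-1))),
         Abelianization.of (GE.ρ g)} = ⊤) := by
  constructor
  · intro hodd
    refine ⟨⟨oddEquiv g hg hodd⟩, ?_⟩
    refine gen_top _ fun y => ?_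
    cases y with
    | some i =>
        have h2 : Abelianization.of (GE.t i) ∈
            Subgroup.closure {Abelianization.of (GE.t (⟨0, by omega⟩ : Fin (g-1)))} := by
          rw [t_all g hg i]
          exact Subgroup.subset_closure rfl
        exact h2
    | none =>
        have h2 : Abelianization.of (GE.ρ g) ∈
            Subgroup.closure {Abelianization.of (GE.t (⟨0, by omega⟩ : Fin (g-1)))} := by
          refine Subgroup.mem_closure_singleton.mpr ⟨((g-1)*g : ℕ), ?_⟩
          rw [zpow_natCast]
          exact (t_pow g hg).trans (if_pos hodd)
        exact h2
  · intro heven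
    refine ⟨⟨evenEquiv g hg heven⟩, ?_⟩
    refine gen_top _ fun y => ?_
    cases y with
    | some i =>
        have h2 : Abelianization.of (GE.t i) ∈
            Subgroup.closure {Abelianization.of (GE.t (⟨0, by omega⟩ : Fin (g-1))),
              Abelianization.of (GE.ρ g)} := by
          rw [t_all g hg i]
          exact Subgroup.subset_closure (Set.mem_insert _ _)
        exact h2
    | none =>
        have h2 : Abelianization.of (GE.ρ g) ∈
            Subgroup.closure {Abelianization.of (GE.t (⟨0, by omega⟩ : Fin (g-1))),
              Abelianization.of (GE.ρ g)} :=
          Subgroup.subset_closure (Set.mem_insert_iff.mpr (Or.inr rfl))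
        exact h2
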